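/- Let H be a cancellative commutative monoid and r a finitary ideal system on H such that ⋂_{n ∈ ℕ₀} (mⁿ)_r = ∅ for every maximal r-ideal m of H. Then the semigroup I_r(H) of nonempty r-ideals of H under r-multiplication is unit-cancellative, and if moreover H has finite r-character, then I_r(H) is a BF-monoid. -/

import Mathlib

noncomputable section

open scoped Pointwise

set_option synthInstance.maxHeartbeats 1000000
set_option maxHeartbeats 1000000

variable {H : Type*} [CancelCommMonoid H]

/-- An *ideal system* on a cancellative commutative monoid `H` is a closure-type operation
`X ↦ X_r` on subsets of `H` satisfying `X ⊆ X_r`, `X ⊆ Y_r → X_r ⊆ Y_r`, `cH ⊆ {c}_r`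
and `c·X_r = (cX)_r`. -/
structure IsIdealSystem (r : Set H → Set H) : Prop where
  subset_r : ∀ X : Set H, X ⊆ r X
  mono : ∀ X Y : Set H, X ⊆ r Y → r X ⊆ r Y
  mul_univ_subset : ∀ c : H, ({c} : Set H) * (Set.univ : Set H) ⊆ r {c}
  smul_r : ∀ (c : H) (X : Set H), ({c} : Set H) * r X = r (({c} : Set H) * X)

/-- An ideal system is *finitary* if `X_r` is the union of `E_r` over the finite subsets
`E ⊆ X`. -/
def IsFinitaryIdealSystem (r : Set H → Set H) : Prop :=
  IsIdealSystem r ∧ ∀ X : Set H, r X = ⋃ (E : Finset H) (_ : (E : Set H) ⊆ X), r (E : Set H)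

/-- A subset `I ⊆ H` is an `r`-ideal if `I_r = I`. -/
def IsRIdeal (r : Set H → Set H) (I : Set H) : Prop := r I = I

/-- An element of the semigroup `I_r(H)` of nonempty `r`-ideals (with `r`-multiplication
`I ·_r J = (IJ)_r` and identity `H`) is invertible if it has an inverse in this semigroup. -/
def RInvertible (r : Set H → Set H) (J : Set H) : Prop :=
  ∃ J' : Set H, IsRIdeal r J' ∧ J'.Nonempty ∧ r (J * J') = Set.univ

/-- A *maximal `r`-ideal* is a maximal element of the set of proper `r`-ideals. -/
def IsMaximalRIdeal (r : Set H → Set H) (m : Set H) : Prop :=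
  IsRIdeal r m ∧ m ≠ Set.univ ∧
    ∀ J : Set H, IsRIdeal r J → J ≠ Set.univ → m ⊆ J → J = m

/-- An *atom* of the semigroup `I_r(H)` of nonempty `r`-ideals. -/
def IsRAtom (r : Set H → Set H) (A : Set H) : Prop :=
  IsRIdeal r A ∧ A.Nonempty ∧ ¬ RInvertible r A ∧
    ∀ I J : Set H, IsRIdeal r I → I.Nonempty → IsRIdeal r J → J.Nonempty →
      A = r (I * J) → RInvertible r I ∨ RInvertible r J

/-- Product of a list of nonempty `r`-ideals in the semigroup `I_r(H)`, whose identity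
element is `H`. -/
def rListProd (r : Set H → Set H) (l : List (Set H)) : Set H :=
  l.foldr (fun I J => r (I * J)) Set.univ

/-- The semigroup `I_r(H)` of nonempty `r`-ideals is a *BF-monoid*: it is atomic and all
sets of lengths are finite. -/
def RIdealsBF (r : Set H → Set H) : Prop :=
  (∀ I : Set H, IsRIdeal r I → I.Nonempty → ¬ RInvertible r I →
      ∃ l : List (Set H), (∀ A ∈ l, IsRAtom r A) ∧ rListProd r l = I) ∧
    ∀ I : Set H, IsRIdeal r I → I.Nonempty →
      {n : ℕ | ∃ l : List (Set H), l.length = n ∧ (∀ A ∈ l, IsRAtom r A) ∧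
        rListProd r l = I}.Finite

variable {r : Set H → Set H}

lemma r_mono' (hR : IsIdealSystem r) {X Y : Set H} (h : X ⊆ Y) : r X ⊆ r Y :=
  hR.mono _ _ (h.trans (hR.subset_r Y))

lemma r_idem (hR : IsIdealSystem r) (X : Set H) : r (r X) = r X :=
  subset_antisymm (hR.mono _ _ subset_rfl) (hR.subset_r _)

lemma mul_univ_sub (hR : IsIdealSystem r) (X : Set H) : X * Set.univ ⊆ r X := by
  rintro _ ⟨a, ha, b, -, rfl⟩
  exact r_mono' hR (Set.singleton_subset_iff.mpr ha)
    (hR.mul_univ_subset a (Set.mul_mem_mul rfl (Set.mem_univ b)))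

lemma r_univ (hR : IsIdealSystem r) : r (Set.univ : Set H) = Set.univ :=
  Set.eq_univ_of_univ_subset (by
    have : (Set.univ : Set H) * Set.univ ⊆ r Set.univ := mul_univ_sub hR _
    simpa using this)

lemma r_one (hR : IsIdealSystem r) : r (1 : Set H) = Set.univ :=
  Set.eq_univ_of_univ_subset (by
    have : (1 : Set H) * Set.univ ⊆ r 1 := mul_univ_sub hR _
    simpa using this)

lemma mul_sub_r (hR : IsIdealSystem r) (X Y : Set H) : X * Y ⊆ r Y := by
  intro z hz
  have : X * Y ⊆ Y * Set.univ := by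
    rw [mul_comm]; exact Set.mul_subset_mul_left (Set.subset_univ _)
  exact mul_univ_sub hR Y (this hz)

lemma r_mul_r (hR : IsIdealSystem r) (X Y : Set H) : r (X * r Y) = r (X * Y) := by
  apply subset_antisymm
  · apply hR.mono
    rintro _ ⟨a, ha, b, hb, rfl⟩
    have h1 : ({a} : Set H) * r Y = r ({a} * Y) := hR.smul_r a Y
    have : a * b ∈ r (({a} : Set H) * Y) := by
      rw [← h1]; exact Set.mul_mem_mul rfl hb
    exact r_mono' hR (Set.mul_subset_mul_right (Set.singleton_subset_iff.mpr ha)) this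
  · exact r_mono' hR (Set.mul_subset_mul_left (hR.subset_r Y))

lemma r_r_mul_r (hR : IsIdealSystem r) (X Y : Set H) : r (r X * r Y) = r (X * Y) := by
  rw [r_mul_r hR, mul_comm (r X), r_mul_r hR, mul_comm]

lemma ideal_eq_univ_of_one_mem (hR : IsIdealSystem r) {I : Set H} (hI : IsRIdeal r I)
    (h1 : (1 : H) ∈ I) : I = Set.univ := by
  apply Set.eq_univ_of_univ_subset
  have : ({(1:H)} : Set H) * Set.univ ⊆ r I :=
    (hR.mul_univ_subset 1).trans (r_mono' hR (Set.singleton_subset_iff.mpr h1))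
  rw [hI] at this
  simpa using this

lemma rInvertible_univ (hR : IsIdealSystem r) : RInvertible r (Set.univ : Set H) :=
  ⟨Set.univ, r_univ hR, ⟨1, trivial⟩, by rw [Set.univ_mul_univ, r_univ hR]⟩

lemma rInvertible_iff (hR : IsIdealSystem r) {I : Set H} (hI : IsRIdeal r I) :
    RInvertible r I ↔ I = Set.univ := by
  constructor
  · rintro ⟨J', -, -, hJJ'⟩
    have h1 : I * J' ⊆ r I := by
      intro z hz
      exact mul_univ_sub hR I (Set.mul_subset_mul_left (Set.subset_univ _) hz)
    have := r_mono' hR h1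
    rw [r_idem hR, hI, hJJ'] at this
    exact Set.eq_univ_of_univ_subset this
  · rintro rfl; exact rInvertible_univ hR

lemma rListProd_isRIdeal (hR : IsIdealSystem r) (l : List (Set H)) :
    IsRIdeal r (rListProd r l) := by
  cases l with
  | nil => exact r_univ hR
  | cons A l => exact r_idem hR _

lemma rListProd_nonempty (hR : IsIdealSystem r) (l : List (Set H))
    (h : ∀ A ∈ l, A.Nonempty) : (rListProd r l).Nonempty := by
  induction l with
  | nil => exact ⟨1, trivial⟩
  | cons A l ih =>
    obtain ⟨a, ha⟩ := h A List.mem_cons_self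
    obtain ⟨b, hb⟩ := ih (fun B hB => h B (List.mem_cons_of_mem _ hB))
    exact ⟨a * b, hR.subset_r _ (Set.mul_mem_mul ha hb)⟩

lemma rListProd_subset_mem (hR : IsIdealSystem r) (l : List (Set H))
    (hl : ∀ A ∈ l, IsRIdeal r A) {A : Set H} (hA : A ∈ l) : rListProd r l ⊆ A := by
  induction l with
  | nil => simp at hA
  | cons B l ih =>
    have hQ : IsRIdeal r (rListProd r l) := rListProd_isRIdeal hR l
    rcases List.mem_cons.mp hA with rfl | hA
    · have h1 : A * rListProd r l ⊆ r A := by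
        rw [mul_comm]; exact mul_sub_r hR _ _
      have h2 := r_mono' hR h1
      rw [r_idem hR, hl A List.mem_cons_self] at h2
      exact h2
    · have h1 : B * rListProd r l ⊆ r (rListProd r l) := mul_sub_r hR _ _
      have h2 := r_mono' hR h1
      rw [r_idem hR, hQ] at h2
      exact h2.trans (ih (fun C hC => hl C (List.mem_cons_of_mem _ hC)) hA)

lemma r_mul_univ (hR : IsIdealSystem r) (X : Set H) : r (X * Set.univ) = r X := by
  apply subset_antisymm
  · exact hR.mono _ _ (mul_univ_sub hR X)
  · exact r_mono' hR (by intro x hx; exact ⟨x, hx, 1, trivial, mul_one x⟩)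

lemma rListProd_append (hR : IsIdealSystem r) (l l' : List (Set H)) :
    rListProd r (l ++ l') = r (rListProd r l * rListProd r l') := by
  induction l with
  | nil =>
    simp only [List.nil_append, rListProd, List.foldr_nil]
    rw [mul_comm, r_mul_univ hR]
    exact (rListProd_isRIdeal hR l').symm
  | cons A l ih =>
    show r (A * rListProd r (l ++ l')) = _
    rw [ih, r_mul_r hR, ← mul_assoc]
    show _ = r (r (A * rListProd r l) * rListProd r l')
    rw [mul_comm (r (A * rListProd r l)), r_mul_r hR, mul_comm]

lemma chain_finset_sub {c : Set (Set H)} (hc : ∀ (A B : Set H), A ∈ c → B ∈ c → A ⊆ B ∨ B ⊆ A)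
    {K0 : Set H} (hK0 : K0 ∈ c) :
    ∀ E : Finset H, (E : Set H) ⊆ ⋃₀ c → ∃ K ∈ c, (E : Set H) ⊆ K := by
  classical
  intro E
  induction E using Finset.induction_on with
  | empty => intro _; exact ⟨K0, hK0, by simp⟩
  | @insert a E ha ih =>
    intro hins
    have haU : a ∈ ⋃₀ c := hins (by simp)
    obtain ⟨Ka, hKa, haKa⟩ := haU
    obtain ⟨K, hK, hEK⟩ := ih ((Set.subset_insert _ _).trans (by push_cast at hins ⊢; exact hins))
    rcases hc Ka K hKa hK with h | h
    · refine ⟨K, hK, ?_⟩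
      push_cast
      exact Set.insert_subset (h haKa) hEK
    · refine ⟨Ka, hKa, ?_⟩
      push_cast
      exact Set.insert_subset haKa (hEK.trans h)

lemma exists_maximal_rIdeal (hr : IsFinitaryIdealSystem r) {J : Set H}
    (hJ : IsRIdeal r J) (hne : J ≠ Set.univ) :
    ∃ m : Set H, IsMaximalRIdeal r m ∧ J ⊆ m := by
  obtain ⟨hR, hfin⟩ := hr
  set S : Set (Set H) := {K | IsRIdeal r K ∧ (1 : H) ∉ K} with hS
  have hJS : J ∈ S := ⟨hJ, fun h1 => hne (ideal_eq_univ_of_one_mem hR hJ h1)⟩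
  have hchain : ∀ c ⊆ S, IsChain (· ⊆ ·) c → c.Nonempty →
      ∃ ub ∈ S, ∀ s ∈ c, s ⊆ ub := by
    intro c hcS hc hcne
    obtain ⟨K0, hK0⟩ := hcne
    refine ⟨⋃₀ c, ⟨?_, ?_⟩, fun s hs => Set.subset_sUnion_of_mem hs⟩
    · apply subset_antisymm _ (hR.subset_r _)
      rw [hfin (⋃₀ c)]
      intro x hx
      simp only [Set.mem_iUnion] at hx
      obtain ⟨E, hE, hxE⟩ := hx
      have hc' : ∀ (A B : Set H), A ∈ c → B ∈ c → A ⊆ B ∨ B ⊆ A := by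
        intro A B hA hB
        rcases eq_or_ne A B with rfl | hne
        · left; rfl
        · exact hc hA hB hne
      obtain ⟨K, hKc, hEK⟩ := chain_finset_sub hc' hK0 E hE
      have hrEK : r (E : Set H) ⊆ K := by
        have := r_mono' hR hEK
        rwa [(hcS hKc).1] at this
      exact Set.subset_sUnion_of_mem hKc (hrEK hxE)
    · intro h1
      obtain ⟨K, hKc, h1K⟩ := h1
      exact (hcS hKc).2 h1K
  obtain ⟨m, hJm, hmS, hmax⟩ := zorn_subset_nonempty S hchain J hJS
  refine ⟨m, ⟨hmS.1, fun h => hmS.2 (h ▸ trivial), ?_⟩, hJm⟩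
  intro K hK hKne hmK
  have hKS : K ∈ S := ⟨hK, fun h1 => hKne (ideal_eq_univ_of_one_mem hR hK h1)⟩
  exact subset_antisymm (hmax hKS hmK) hmK

lemma r_pow_succ_sub (hR : IsIdealSystem r) (m : Set H) (n : ℕ) :
    r (m ^ (n + 1)) ⊆ r (m ^ n) := by
  apply hR.mono
  rw [pow_succ, mul_comm]
  exact mul_sub_r hR m (m ^ n)

lemma r_pow_antitone (hR : IsIdealSystem r) (m : Set H) {a b : ℕ} (h : a ≤ b) :
    r (m ^ b) ⊆ r (m ^ a) := by
  induction b with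
  | zero => rw [Nat.le_zero.mp h]
  | succ n ih =>
    rcases h.lt_or_eq with hlt | rfl
    · exact (r_pow_succ_sub hR m n).trans (ih (Nat.lt_succ_iff.mp hlt))
    · rfl

lemma rListProd_subset_r_pow (hR : IsIdealSystem r) (m : Set H) (p : Set H → Bool)
    (l : List (Set H)) (hp : ∀ A ∈ l, p A = true → A ⊆ m) :
    rListProd r l ⊆ r (m ^ l.countP p) := by
  induction l with
  | nil =>
    simp only [List.countP_nil, pow_zero]
    rw [r_one hR]; exact Set.subset_univ _
  | cons A l ih =>
    have ihl := ih (fun B hB => hp B (List.mem_cons_of_mem _ hB))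
    rw [List.countP_cons]
    set k := l.countP p with hk
    by_cases hb : p A = true
    · simp only [hb, if_true]
      show r (A * rListProd r l) ⊆ r (m ^ (k + 1))
      have h1 : A * rListProd r l ⊆ m * r (m ^ k) :=
        Set.mul_subset_mul (hp A List.mem_cons_self hb) ihl
      have h2 : r (A * rListProd r l) ⊆ r (m * r (m ^ k)) := r_mono' hR h1
      rw [r_mul_r hR] at h2
      rw [pow_succ, mul_comm (m ^ k) m]
      exact h2
    · simp only [hb, if_false, add_zero]
      apply hR.mono
      have hQ : IsRIdeal r (rListProd r l) := rListProd_isRIdeal hR l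
      have : A * rListProd r l ⊆ rListProd r l := by
        have := mul_sub_r hR A (rListProd r l)
        rwa [hQ] at this
      exact this.trans ihl

lemma factorization_length_bound (hr : IsFinitaryIdealSystem r)
    (hcap : ∀ m : Set H, IsMaximalRIdeal r m → (⋂ n : ℕ, r (m ^ n)) = ∅)
    (hchar : ∀ x : H, {m : Set H | IsMaximalRIdeal r m ∧ x ∈ m}.Finite)
    {I : Set H} {x : H} (hx : x ∈ I) :
    ∃ N : ℕ, ∀ l : List (Set H),
      (∀ A ∈ l, IsRIdeal r A ∧ A.Nonempty ∧ A ≠ Set.univ) →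
      rListProd r l = I → l.length ≤ N := by
  classical
  have hR := hr.1
  set Mfin := (hchar x).toFinset with hMfin
  have hex : ∀ m : Set H, m ∈ Mfin → ∃ n : ℕ, x ∉ r (m ^ n) := by
    intro m hm
    rw [Set.Finite.mem_toFinset] at hm
    by_contra hcon
    push_neg at hcon
    have : x ∈ ⋂ n : ℕ, r (m ^ n) := Set.mem_iInter.mpr hcon
    rw [hcap m hm.1] at this
    exact this
  choose! Nf hNf using hex
  refine ⟨∑ m ∈ Mfin, Nf m, ?_⟩
  intro l hl hprod
  have hμex : ∀ A ∈ l, ∃ mm : Set H, IsMaximalRIdeal r mm ∧ A ⊆ mm := by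
    intro A hA
    exact exists_maximal_rIdeal hr (hl A hA).1 (hl A hA).2.2
  choose! μ hμ1 hμ2 using hμex
  have hsubA : ∀ A ∈ l, I ⊆ A := by
    intro A hA
    rw [← hprod]
    exact rListProd_subset_mem hR l (fun B hB => (hl B hB).1) hA
  have hμmem : ∀ A ∈ l, μ A ∈ Mfin := by
    intro A hA
    rw [Set.Finite.mem_toFinset]
    exact ⟨hμ1 A hA, hμ2 A hA (hsubA A hA hx)⟩
  -- counting
  set s : Multiset (Set H) := (l.map μ : Multiset (Set H)) with hs
  have hcard : Multiset.card s = l.length := by simp [hs]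
  have hsub : s.toFinset ⊆ Mfin := by
    intro m hm
    rw [Multiset.mem_toFinset] at hm
    simp only [hs, Multiset.mem_coe, List.mem_map] at hm
    obtain ⟨A, hA, rfl⟩ := hm
    exact hμmem A hA
  have hcount : ∀ m ∈ Mfin, s.count m ≤ Nf m := by
    intro m hm
    have hcnt : s.count m = l.countP (fun A => decide (μ A = m)) := by
      rw [hs, Multiset.coe_count, List.count, List.countP_map]
      rfl
    have hpow : rListProd r l ⊆ r (m ^ l.countP (fun A => decide (μ A = m))) := by
      apply rListProd_subset_r_pow hR m _ l
      intro A hA hp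
      have hm' : μ A = m := of_decide_eq_true hp
      exact hm' ▸ hμ2 A hA
    by_contra hcon
    push_neg at hcon
    have hxm : x ∈ r (m ^ l.countP (fun A => decide (μ A = m))) := hpow (hprod ▸ hx)
    have hxm2 : x ∈ r (m ^ Nf m) := r_pow_antitone hR m (by rw [← hcnt]; omega) hxm
    exact hNf m hm hxm2
  calc l.length = Multiset.card s := hcard.symm
    _ = ∑ m ∈ s.toFinset, s.count m := (Multiset.toFinset_sum_count_eq s).symm
    _ ≤ ∑ m ∈ Mfin, s.count m := Finset.sum_le_sum_of_subset hsub
    _ ≤ ∑ m ∈ Mfin, Nf m := Finset.sum_le_sum hcount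

lemma rListProd_singleton (hR : IsIdealSystem r) {I : Set H} (hI : IsRIdeal r I) :
    rListProd r [I] = I := by
  show r (I * Set.univ) = I
  rw [r_mul_univ hR, hI]

lemma unit_cancel (hr : IsFinitaryIdealSystem r)
    (hcap : ∀ m : Set H, IsMaximalRIdeal r m → (⋂ n : ℕ, r (m ^ n)) = ∅)
    {I J : Set H} (hI : IsRIdeal r I) (hIne : I.Nonempty) (hJ : IsRIdeal r J)
    (hJne : J.Nonempty) (hIJ : r (I * J) = I) : RInvertible r J := by
  have hR := hr.1
  rw [rInvertible_iff hR hJ]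
  by_contra hne
  obtain ⟨m, hm, hJm⟩ := exists_maximal_rIdeal hr hJ hne
  have hIn : ∀ n : ℕ, I ⊆ r (m ^ n) := by
    intro n
    induction n with
    | zero => rw [pow_zero, r_one hR]; exact Set.subset_univ _
    | succ k ih =>
      rw [← hIJ]
      have h1 : I * J ⊆ r (m ^ k) * m := Set.mul_subset_mul ih hJm
      have h2 := r_mono' hR h1
      rw [mul_comm (r (m ^ k)) m, r_mul_r hR] at h2
      rw [pow_succ, mul_comm (m ^ k) m]
      exact h2
  obtain ⟨x, hx⟩ := hIne
  have : x ∈ ⋂ n : ℕ, r (m ^ n) := Set.mem_iInter.mpr fun n => hIn n hx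
  rw [hcap m hm] at this
  exact this

lemma atomic_aux (hr : IsFinitaryIdealSystem r) :
    ∀ N : ℕ, ∀ I : Set H, IsRIdeal r I → I.Nonempty → I ≠ Set.univ →
      (∀ l : List (Set H), (∀ A ∈ l, IsRIdeal r A ∧ A.Nonempty ∧ A ≠ Set.univ) →
        rListProd r l = I → l.length ≤ N) →
      ∃ l : List (Set H), (∀ A ∈ l, IsRAtom r A) ∧ rListProd r l = I := by
  have hR := hr.1
  intro N
  induction N with
  | zero =>
    intro I hI hIne hIuniv hbound
    exfalso
    have := hbound [I] (by
      intro A hA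
      rw [List.mem_singleton] at hA
      subst hA
      exact ⟨hI, hIne, hIuniv⟩) (rListProd_singleton hR hI)
    simp at this
  | succ n ih =>
    intro I hI hIne hIuniv hbound
    by_cases hatom : IsRAtom r I
    · refine ⟨[I], ?_, rListProd_singleton hR hI⟩
      intro A hA
      rw [List.mem_singleton] at hA
      subst hA
      exact hatom
    · have hninv : ¬ RInvertible r I := by
        rw [rInvertible_iff hR hI]; exact hIuniv
      simp only [IsRAtom, not_and, not_forall] at hatom
      obtain ⟨Jf, Kf, hJf, hJfne, hKf, hKfne, hIeq, hnot⟩ := hatom hI hIne hninv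
      push_neg at hnot
      obtain ⟨hJninv, hKninv⟩ := hnot
      have hJuniv : Jf ≠ Set.univ := fun h => hJninv ((rInvertible_iff hR hJf).mpr h)
      have hKuniv : Kf ≠ Set.univ := fun h => hKninv ((rInvertible_iff hR hKf).mpr h)
      -- bounds for Jf and Kf
      have hboundJ : ∀ l : List (Set H),
          (∀ A ∈ l, IsRIdeal r A ∧ A.Nonempty ∧ A ≠ Set.univ) →
          rListProd r l = Jf → l.length ≤ n := by
        intro l hl hprod
        have hl' : ∀ A ∈ l ++ [Kf], IsRIdeal r A ∧ A.Nonempty ∧ A ≠ Set.univ := by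
          intro A hA
          rcases List.mem_append.mp hA with h | h
          · exact hl A h
          · rw [List.mem_singleton] at h; subst h; exact ⟨hKf, hKfne, hKuniv⟩
        have hprod' : rListProd r (l ++ [Kf]) = I := by
          rw [rListProd_append hR, hprod, rListProd_singleton hR hKf, hIeq]
        have := hbound (l ++ [Kf]) hl' hprod'
        simp at this
        omega
      have hboundK : ∀ l : List (Set H),
          (∀ A ∈ l, IsRIdeal r A ∧ A.Nonempty ∧ A ≠ Set.univ) →
          rListProd r l = Kf → l.length ≤ n := by
        intro l hl hprod
        have hl' : ∀ A ∈ l ++ [Jf], IsRIdeal r A ∧ A.Nonempty ∧ A ≠ Set.univ := by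
          intro A hA
          rcases List.mem_append.mp hA with h | h
          · exact hl A h
          · rw [List.mem_singleton] at h; subst h; exact ⟨hJf, hJfne, hJuniv⟩
        have hprod' : rListProd r (l ++ [Jf]) = I := by
          rw [rListProd_append hR, hprod, rListProd_singleton hR hJf, hIeq, mul_comm]
        have := hbound (l ++ [Jf]) hl' hprod'
        simp at this
        omega
      obtain ⟨lJ, hlJ, hlJprod⟩ := ih Jf hJf hJfne hJuniv hboundJ
      obtain ⟨lK, hlK, hlKprod⟩ := ih Kf hKf hKfne hKuniv hboundK
      refine ⟨lJ ++ lK, ?_, ?_⟩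
      · intro A hA
        rcases List.mem_append.mp hA with h | h
        · exact hlJ A h
        · exact hlK A h
      · rw [rListProd_append hR, hlJprod, hlKprod, hIeq]

theorem rIdeals_unitCancellative_and_BF (r : Set H → Set H)
    (hr : IsFinitaryIdealSystem r)
    (hcap : ∀ m : Set H, IsMaximalRIdeal r m → (⋂ n : ℕ, r (m ^ n)) = ∅) :
    (∀ I J : Set H, IsRIdeal r I → I.Nonempty → IsRIdeal r J → J.Nonempty →
        r (I * J) = I → RInvertible r J) ∧
    ((∀ x : H, {m : Set H | IsMaximalRIdeal r m ∧ x ∈ m}.Finite) → RIdealsBF r) := by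
  have hR := hr.1
  constructor
  · intro I J hI hIne hJ hJne h
    exact unit_cancel hr hcap hI hIne hJ hJne h
  · intro hchar
    constructor
    · intro I hI hIne hninv
      have hIuniv : I ≠ Set.univ := fun h => hninv (h ▸ rInvertible_univ hR)
      obtain ⟨x, hx⟩ := hIne
      obtain ⟨N, hN⟩ := factorization_length_bound hr hcap hchar hx
      exact atomic_aux hr N I hI ⟨x, hx⟩ hIuniv hN
    · intro I hI hIne
      have hatomprop : ∀ A : Set H, IsRAtom r A →
          IsRIdeal r A ∧ A.Nonempty ∧ A ≠ Set.univ := by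
        intro A hA
        exact ⟨hA.1, hA.2.1, fun h => hA.2.2.1 (h ▸ rInvertible_univ hR)⟩
      by_cases hIu : I = Set.univ
      · apply Set.Finite.subset (Set.finite_singleton 0)
        rintro n ⟨l, hlen, hatoms, hprod⟩
        cases l with
        | nil => simp at hlen; simp [hlen]
        | cons A l' =>
          exfalso
          have hsub : rListProd r (A :: l') ⊆ A :=
            rListProd_subset_mem hR _ (fun B hB => (hatoms B hB).1)
              List.mem_cons_self
          rw [hprod, hIu] at hsub
          have : A = Set.univ := Set.eq_univ_of_univ_subset hsub
          exact (hatomprop A (hatoms A List.mem_cons_self)).2.2 this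
      · obtain ⟨x, hx⟩ := hIne
        obtain ⟨N, hN⟩ := factorization_length_bound hr hcap hchar hx
        apply Set.Finite.subset (Set.finite_Iic N)
        rintro n ⟨l, hlen, hatoms, hprod⟩
        rw [Set.mem_Iic, ← hlen]
        exact hN l (fun A hA => hatomprop A (hatoms A hA)) hprod
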